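/- Under the DCSBM population setup with simple eigenvalues of D̃P̃D̃, the row-normalized matrix X* satisfies: for any two nodes i and j with g_i ≠ g_j, the i-th and j-th rows of X* are different; combined with equality of rows within each community, X* has exactly K distinct rows. -/
import Mathlib


open Matrix BigOperators MeasureTheory ProbabilityTheory

noncomputable section

namespace DCSBM

variable {n K : ℕ}

/-- The `n × K` membership matrix `Z` with `Z i k = 1` iff node `i` is in community `k`. -/
def Zmat (g : Fin n → Fin K) : Matrix (Fin n) (Fin K) ℝ :=
  Matrix.of fun i k => if g i = k then (1 : ℝ) else 0

/-- The population expectation matrix `Ω = Θ Z P Zᵀ Θ`. -/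
def Omega (g : Fin n → Fin K) (θ : Fin n → ℝ) (P : Matrix (Fin K) (Fin K) ℝ) :
    Matrix (Fin n) (Fin n) ℝ :=
  Matrix.diagonal θ * Zmat g * P * (Zmat g)ᵀ * Matrix.diagonal θ

/-- Expected degrees `𝒟_ii = ∑_j Ω_ij`. -/
def Dvec (g : Fin n → Fin K) (θ : Fin n → ℝ) (P : Matrix (Fin K) (Fin K) ℝ) : Fin n → ℝ :=
  fun i => ∑ j, Omega g θ P i j

/-- The regularized population Laplacian `𝓛_δ = 𝒟_δ^{-1/2} Ω 𝒟_δ^{-1/2}`. -/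
def Ldelta (g : Fin n → Fin K) (θ : Fin n → ℝ) (P : Matrix (Fin K) (Fin K) ℝ) (δ d : ℝ) :
    Matrix (Fin n) (Fin n) ℝ :=
  Matrix.diagonal (fun i => (Real.sqrt (Dvec g θ P i + δ * d))⁻¹) * Omega g θ P *
    Matrix.diagonal (fun i => (Real.sqrt (Dvec g θ P i + δ * d))⁻¹)

/-- `θ^δ_i = θ_i 𝒟_ii / (𝒟_ii + δ d)`. -/
def thetaDelta (g : Fin n → Fin K) (θ : Fin n → ℝ) (P : Matrix (Fin K) (Fin K) ℝ) (δ d : ℝ) :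
    Fin n → ℝ :=
  fun i => θ i * Dvec g θ P i / (Dvec g θ P i + δ * d)

/-- `θ̃_i = √(θ^δ_i)`. -/
def thetaTilde (g : Fin n → Fin K) (θ : Fin n → ℝ) (P : Matrix (Fin K) (Fin K) ℝ) (δ d : ℝ) :
    Fin n → ℝ :=
  fun i => Real.sqrt (thetaDelta g θ P δ d i)

/-- `θ̃^{(k)}_i = θ̃_i · 1{g i = k}`. -/
def thetaTildeK (g : Fin n → Fin K) (θ : Fin n → ℝ) (P : Matrix (Fin K) (Fin K) ℝ) (δ d : ℝ)
    (k : Fin K) : Fin n → ℝ :=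
  fun i => if g i = k then thetaTilde g θ P δ d i else 0

/-- Euclidean norm of a vector. -/
def normE {m : ℕ} (v : Fin m → ℝ) : ℝ := Real.sqrt (∑ i, v i ^ 2)

/-- Row sums of `Q = P Zᵀ Θ`, the diagonal entries of `D_P`. -/
def DPvec (g : Fin n → Fin K) (θ : Fin n → ℝ) (P : Matrix (Fin K) (Fin K) ℝ) : Fin K → ℝ :=
  fun k => ∑ j, (P * (Zmat g)ᵀ * Matrix.diagonal θ) k j

/-- `P̃ = D_P^{-1/2} P D_P^{-1/2}`. -/
def Ptilde (g : Fin n → Fin K) (θ : Fin n → ℝ) (P : Matrix (Fin K) (Fin K) ℝ) :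
    Matrix (Fin K) (Fin K) ℝ :=
  Matrix.diagonal (fun k => (Real.sqrt (DPvec g θ P k))⁻¹) * P *
    Matrix.diagonal (fun k => (Real.sqrt (DPvec g θ P k))⁻¹)

/-- `D̃ = diag(‖θ̃^{(k)}‖ / ‖θ̃‖)`. -/
def Dtilde (g : Fin n → Fin K) (θ : Fin n → ℝ) (P : Matrix (Fin K) (Fin K) ℝ) (δ d : ℝ) :
    Matrix (Fin K) (Fin K) ℝ :=
  Matrix.diagonal fun k => normE (thetaTildeK g θ P δ d k) / normE (thetaTilde g θ P δ d)

/-- `Γ̃`, the `n × K` matrix whose `k`-th column is `θ̃^{(k)} / ‖θ̃^{(k)}‖`. -/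
def Gamma (g : Fin n → Fin K) (θ : Fin n → ℝ) (P : Matrix (Fin K) (Fin K) ℝ) (δ d : ℝ) :
    Matrix (Fin n) (Fin K) ℝ :=
  Matrix.of fun i k => thetaTildeK g θ P δ d k i / normE (thetaTildeK g θ P δ d k)


section Aux

lemma normE_pos {m : ℕ} (v : Fin m → ℝ) (h : ∃ i, v i ≠ 0) : 0 < normE v := by
  obtain ⟨i, hi⟩ := h
  exact Real.sqrt_pos.2 (Finset.sum_pos' (fun j _ => sq_nonneg _)
    ⟨i, Finset.mem_univ i, by positivity⟩)

lemma normE_smul {m : ℕ} (c : ℝ) (hc : 0 ≤ c) (v : Fin m → ℝ) :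
    normE (fun i => c * v i) = c * normE v := by
  unfold normE
  rw [show (∑ i, (c * v i) ^ 2) = c ^ 2 * ∑ i, v i ^ 2 by rw [Finset.mul_sum]; ring_nf,
    Real.sqrt_mul (sq_nonneg c), Real.sqrt_sq hc]

lemma normE_sq_one {m : ℕ} (v : Fin m → ℝ) (h : normE v = 1) : ∑ i, v i ^ 2 = 1 :=
  Real.sqrt_eq_one.mp h

lemma ZPZt (g : Fin n → Fin K) (P : Matrix (Fin K) (Fin K) ℝ) (i j : Fin n) :
    (Zmat g * P * (Zmat g)ᵀ) i j = P (g i) (g j) := by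
  simp [Matrix.mul_apply, Zmat, Matrix.transpose_apply, ite_mul, mul_ite,
    Finset.sum_ite_eq, Finset.sum_ite_eq']

lemma Omega_apply (g : Fin n → Fin K) (θ : Fin n → ℝ) (P : Matrix (Fin K) (Fin K) ℝ)
    (i j : Fin n) : Omega g θ P i j = θ i * P (g i) (g j) * θ j := by
  have h : Omega g θ P = Matrix.diagonal θ * (Zmat g * P * (Zmat g)ᵀ) * Matrix.diagonal θ := by
    simp [Omega, Matrix.mul_assoc]
  rw [h, Matrix.mul_diagonal, Matrix.diagonal_mul, ZPZt]

lemma DPvec_apply (g : Fin n → Fin K) (θ : Fin n → ℝ) (P : Matrix (Fin K) (Fin K) ℝ)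
    (k : Fin K) : DPvec g θ P k = ∑ j, P k (g j) * θ j := by
  refine Finset.sum_congr rfl fun j _ => ?_
  rw [Matrix.mul_diagonal]
  congr 1
  simp [Matrix.mul_apply, Zmat, Matrix.transpose_apply, mul_ite,
    Finset.sum_ite_eq, Finset.sum_ite_eq']

lemma P_row_ne_zero {P : Matrix (Fin K) (Fin K) ℝ} (hPdet : P.det ≠ 0) (k : Fin K) :
    ∃ l, P k l ≠ 0 := by
  by_contra h
  push_neg at h
  exact hPdet (Matrix.det_eq_zero_of_row_eq_zero k h)

end Aux

/-- Rows of the row-normalized matrix `X*` corresponding to different communities are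
different; consequently `X*` has exactly `K` distinct rows. -/
theorem stmt8 {n K : ℕ} (hK : 1 ≤ K) (hKn : K ≤ n)
    (g : Fin n → Fin K) (hg : Function.Surjective g)
    (θ : Fin n → ℝ) (hθ : ∀ i, 0 < θ i)
    (P : Matrix (Fin K) (Fin K) ℝ) (hPsymm : P.IsSymm) (hPdet : P.det ≠ 0)
    (hPnn : ∀ k l, 0 ≤ P k l)
    (δ d : ℝ) (hδ : 0 < δ) (hd : 0 < d)
    (lam : Fin K → ℝ) (a : Fin K → Fin K → ℝ)
    (heig : ∀ j, (Dtilde g θ P δ d * Ptilde g θ P * Dtilde g θ P δ d) *ᵥ a j =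
      (lam j / (normE (thetaTilde g θ P δ d)) ^ 2) • a j)
    (haunit : ∀ j, normE (a j) = 1)
    (hdesc : ∀ j j' : Fin K, j ≤ j' → |lam j'| ≤ |lam j|)
    (hsimple : Function.Injective lam)
    (X : Matrix (Fin n) (Fin (K + 1)) ℝ)
    (hX : ∀ (i : Fin n) (j : Fin (K + 1)), X i j =
      if h : (j : ℕ) < K then lam ⟨j, h⟩ * ((Gamma g θ P δ d) *ᵥ a ⟨j, h⟩) i else 0) :
    (∀ i i' : Fin n, g i ≠ g i' →
        (fun j => X i j / normE (X i)) ≠ (fun j => X i' j / normE (X i'))) ∧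
      Set.ncard (Set.range fun i : Fin n => fun j => X i j / normE (X i)) = K := by
  classical
  have hnpos : 0 < n := lt_of_lt_of_le hK hKn
  -- positivity of expected degrees
  have hDpos : ∀ i, 0 < Dvec g θ P i := by
    intro i
    obtain ⟨l, hl⟩ := P_row_ne_zero hPdet (g i)
    obtain ⟨j0, hj0⟩ := hg l
    have hrw : Dvec g θ P i = ∑ j, θ i * P (g i) (g j) * θ j :=
      Finset.sum_congr rfl fun j _ => Omega_apply g θ P i j
    rw [hrw]
    refine Finset.sum_pos' (fun j _ => by
      have := (hθ i).le; have := (hθ j).le; have := hPnn (g i) (g j); positivity)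
      ⟨j0, Finset.mem_univ j0, ?_⟩
    have hP0 : 0 < P (g i) (g j0) := by
      rw [hj0]; exact lt_of_le_of_ne (hPnn (g i) l) (Ne.symm hl)
    exact mul_pos (mul_pos (hθ i) hP0) (hθ j0)
  have hθtpos : ∀ i, 0 < thetaTilde g θ P δ d i := by
    intro i
    refine Real.sqrt_pos.2 ?_
    unfold thetaDelta
    have h1 := hDpos i
    have h2 := mul_pos hδ hd
    exact div_pos (mul_pos (hθ i) (hDpos i)) (by linarith)
  have hNKpos : ∀ k, 0 < normE (thetaTildeK g θ P δ d k) := by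
    intro k
    obtain ⟨i0, hi0⟩ := hg k
    exact normE_pos _ ⟨i0, by simp [thetaTildeK, hi0, (hθtpos i0).ne']⟩
  have hN1pos : 0 < normE (thetaTilde g θ P δ d) :=
    normE_pos _ ⟨⟨0, hnpos⟩, (hθtpos _).ne'⟩
  have hDPpos : ∀ k, 0 < DPvec g θ P k := by
    intro k
    obtain ⟨l, hl⟩ := P_row_ne_zero hPdet k
    obtain ⟨j0, hj0⟩ := hg l
    rw [DPvec_apply]
    refine Finset.sum_pos' (fun j _ => mul_nonneg (hPnn _ _) (hθ j).le)
      ⟨j0, Finset.mem_univ j0, ?_⟩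
    have hP0 : 0 < P k (g j0) := by
      rw [hj0]; exact lt_of_le_of_ne (hPnn k l) (Ne.symm hl)
    exact mul_pos hP0 (hθ j0)
  set B := Dtilde g θ P δ d * Ptilde g θ P * Dtilde g θ P δ d with hB
  -- symmetry of B
  have hPt : (Ptilde g θ P)ᵀ = Ptilde g θ P := by
    unfold Ptilde
    rw [Matrix.transpose_mul, Matrix.transpose_mul, Matrix.diagonal_transpose, hPsymm.eq,
      Matrix.mul_assoc]
  have hDt : (Dtilde g θ P δ d)ᵀ = Dtilde g θ P δ d := by
    unfold Dtilde
    rw [Matrix.diagonal_transpose]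
  have hBsymm : Bᵀ = B := by
    rw [hB, Matrix.transpose_mul, Matrix.transpose_mul, hDt, hPt, Matrix.mul_assoc]
  -- nonsingularity of B
  have hBdet : B.det ≠ 0 := by
    rw [hB]
    unfold Dtilde Ptilde
    simp only [Matrix.det_mul, Matrix.det_diagonal]
    have h1 : (∏ k, normE (thetaTildeK g θ P δ d k) / normE (thetaTilde g θ P δ d)) ≠ 0 :=
      Finset.prod_ne_zero_iff.mpr fun k _ => (div_pos (hNKpos k) hN1pos).ne'
    have h2 : (∏ k : Fin K, (Real.sqrt (DPvec g θ P k))⁻¹) ≠ 0 :=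
      Finset.prod_ne_zero_iff.mpr fun k _ =>
        inv_ne_zero (Real.sqrt_pos.2 (hDPpos k)).ne'
    repeat' apply mul_ne_zero
    all_goals first | exact h1 | exact h2 | exact hPdet
  -- eigenvalues are nonzero
  have hlam : ∀ j, lam j ≠ 0 := by
    intro j hj
    have h0 : B *ᵥ a j = 0 := by rw [heig j, hj]; simp
    have ha0 : a j = 0 := Matrix.eq_zero_of_mulVec_eq_zero hBdet h0
    have := haunit j
    rw [ha0] at this
    simp [normE] at this
  -- orthogonality of eigenvectors
  have hdot : ∀ j j', j ≠ j' → (a j) ⬝ᵥ (a j') = 0 := by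
    intro j j' hjj
    have hsym : a j ⬝ᵥ (B *ᵥ a j') = (B *ᵥ a j) ⬝ᵥ a j' := by
      rw [Matrix.dotProduct_mulVec, ← Matrix.mulVec_transpose, hBsymm]
    rw [heig j, heig j', dotProduct_smul, smul_dotProduct] at hsym
    have hN2 : (normE (thetaTilde g θ P δ d)) ^ 2 ≠ 0 := pow_ne_zero _ hN1pos.ne'
    have hmu : lam j' / (normE (thetaTilde g θ P δ d)) ^ 2 ≠
        lam j / (normE (thetaTilde g θ P δ d)) ^ 2 := by
      intro h
      exact hjj (hsimple ((div_left_inj' hN2).mp h)).symm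
    have : (lam j' / (normE (thetaTilde g θ P δ d)) ^ 2 -
        lam j / (normE (thetaTilde g θ P δ d)) ^ 2) * (a j ⬝ᵥ a j') = 0 := by
      simp only [smul_eq_mul] at hsym
      linear_combination hsym
    rcases mul_eq_zero.mp this with h | h
    · exact absurd (sub_eq_zero.mp h) hmu
    · exact h
  -- orthonormal rows
  have haunit' : ∀ j, ∑ k, a j k ^ 2 = 1 := fun j => normE_sq_one _ (haunit j)
  set A : Matrix (Fin K) (Fin K) ℝ := Matrix.of (fun k j => a j k) with hA
  have hAtA : Aᵀ * A = 1 := by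
    ext j j'
    simp only [Matrix.mul_apply, Matrix.transpose_apply, hA, Matrix.of_apply,
      Matrix.one_apply]
    by_cases h : j = j'
    · subst h
      simp only [if_pos rfl]
      calc (∑ k, a j k * a j k) = ∑ k, a j k ^ 2 := by
            exact Finset.sum_congr rfl fun k _ => (sq (a j k)).symm
        _ = 1 := haunit' j
    · rw [if_neg h]
      exact hdot j j' h
  have hAAt : A * Aᵀ = 1 := mul_eq_one_comm.mp hAtA
  have hrow : ∀ k l, (∑ j, a j k * a j l) = if k = l then (1:ℝ) else 0 := by
    intro k l
    have h := congrFun (congrFun hAAt k) l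
    simpa [Matrix.mul_apply, Matrix.transpose_apply, hA, Matrix.one_apply] using h
  -- Gamma mulVec formula
  have hGam : ∀ (b : Fin K → ℝ) (i : Fin n),
      (Gamma g θ P δ d *ᵥ b) i =
        thetaTilde g θ P δ d i / normE (thetaTildeK g θ P δ d (g i)) * b (g i) := by
    intro b i
    simp only [Matrix.mulVec, dotProduct, Gamma, Matrix.of_apply, thetaTildeK,
      div_eq_mul_inv, ite_mul, zero_mul, Finset.sum_ite_eq, Finset.mem_univ, if_true]
  set c : Fin n → ℝ := fun i =>
    thetaTilde g θ P δ d i / normE (thetaTildeK g θ P δ d (g i)) with hc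
  have hcpos : ∀ i, 0 < c i := fun i => div_pos (hθtpos i) (hNKpos (g i))
  -- the pattern vectors
  set w : Fin K → Fin (K + 1) → ℝ := fun k j =>
    if h : (j : ℕ) < K then lam ⟨j, h⟩ * a ⟨j, h⟩ k else 0 with hw
  have hXw : ∀ i j, X i j = c i * w (g i) j := by
    intro i j
    simp only [hX, hw]
    by_cases h : (j : ℕ) < K
    · rw [dif_pos h, dif_pos h, hGam]; ring
    · rw [dif_neg h, dif_neg h, mul_zero]
  have hwcast : ∀ (k : Fin K) (j : Fin K), w k j.castSucc = lam j * a j k := by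
    intro k j
    simp only [hw]
    have hj : ((j.castSucc : Fin (K+1)) : ℕ) < K := by simp [j.isLt]
    rw [dif_pos hj]
    congr 1 <;> congr 1 <;> exact Fin.ext (by simp)
  have hwlast : ∀ k : Fin K, w k (Fin.last K) = 0 := by
    intro k
    simp only [hw]
    exact dif_neg (by simp)
  have hNwpos : ∀ k, 0 < normE (w k) := by
    intro k
    have hak : ∃ j, a j k ≠ 0 := by
      by_contra h
      push_neg at h
      have := hrow k k
      simp only [if_pos rfl] at this
      rw [Finset.sum_eq_zero (fun j _ => by rw [h j, mul_zero])] at this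
      simp at this
    obtain ⟨j, hj⟩ := hak
    exact normE_pos _ ⟨j.castSucc, by rw [hwcast]; exact mul_ne_zero (hlam j) hj⟩
  have hnormX : ∀ i, normE (X i) = c i * normE (w (g i)) := by
    intro i
    have h1 : X i = fun j => c i * w (g i) j := funext fun j => hXw i j
    rw [h1, normE_smul _ (hcpos i).le]
  set v : Fin K → Fin (K + 1) → ℝ := fun k j => w k j / normE (w k) with hv
  have hrowv : ∀ i, (fun j => X i j / normE (X i)) = v (g i) := by
    intro i
    funext j
    rw [hXw, hnormX, hv]
    exact mul_div_mul_left _ _ (hcpos i).ne'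
  -- injectivity of v
  have hvinj : Function.Injective v := by
    intro k l hkl
    by_contra hne
    have h1 : ∀ j : Fin K, a j k = (normE (w k) / normE (w l)) * a j l := by
      intro j
      have h2 := congrFun hkl j.castSucc
      simp only [hv] at h2
      rw [hwcast, hwcast] at h2
      have hk0 := (hNwpos k).ne'
      have hl0 := (hNwpos l).ne'
      have e1 : lam j * a j k = lam j * (normE (w k) / normE (w l) * a j l) := by
        field_simp at h2 ⊢
        linear_combination h2
      exact mul_left_cancel₀ (hlam j) e1
    have h4 : (∑ j, a j k * a j l) = (normE (w k) / normE (w l)) * ∑ j, a j l * a j l := by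
      rw [Finset.mul_sum]
      refine Finset.sum_congr rfl fun j _ => ?_
      rw [h1 j]; ring
    have h5 : (∑ j, a j l * a j l) = 1 := by rw [hrow l l, if_pos rfl]
    rw [h5, mul_one, hrow k l, if_neg hne] at h4
    exact absurd h4.symm (div_pos (hNwpos k) (hNwpos l)).ne'
  constructor
  · intro i i' hgi heq
    exact hgi (hvinj (by rw [← hrowv i, ← hrowv i', heq]))
  · have hre : (Set.range fun i : Fin n => fun j => X i j / normE (X i)) = Set.range v := by
      rw [show (fun i : Fin n => fun j => X i j / normE (X i)) = v ∘ g from funext hrowv,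
        Set.range_comp, hg.range_eq, Set.image_univ]
    rw [hre, ← Set.image_univ, Set.ncard_image_of_injective _ hvinj, Set.ncard_univ,
      Nat.card_eq_fintype_card, Fintype.card_fin]


end DCSBM
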